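/- For a > 0 fixed, b ≠ 0, the single-Gaussian function X_τ(t) = C e^{-at²/2} is the pointwise limit as |τ| → ∞ of the series solutions X(t;τ) = C Σ_{n=0}^∞ (1/n!)(b/(aτ))^n e^{-a(t-nτ)²/2}: for each fixed t ∈ ℝ, lim_{|τ|→∞} X(t;τ) = C e^{-at²/2}. -/

import Mathlib

open Filter

private lemma aux_key (a b t τ : ℝ) (ha : 0 < a) :
    |(∑' n : ℕ, (1 / (n.factorial : ℝ)) * (b / (a * τ)) ^ n *
        Real.exp (-a * (t - n * τ) ^ 2 / 2)) - Real.exp (-a * t ^ 2 / 2)|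
      ≤ |b / (a * τ)| * Real.exp |b / (a * τ)| := by
  set x : ℝ := b / (a * τ) with hx
  set f : ℕ → ℝ := fun n => (1 / (n.factorial : ℝ)) * x ^ n *
      Real.exp (-a * (t - n * τ) ^ 2 / 2) with hf
  have hexp : ∀ n : ℕ, Real.exp (-a * (t - n * τ) ^ 2 / 2) ≤ 1 := by
    intro n
    rw [Real.exp_le_one_iff]
    have : (0:ℝ) ≤ a * (t - n * τ) ^ 2 := by positivity
    nlinarith
  have hbound : ∀ n : ℕ, ‖f n‖ ≤ |x| ^ n / n.factorial := by
    intro n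
    have h1 : ‖f n‖ = (1 / (n.factorial : ℝ)) * |x| ^ n *
        Real.exp (-a * (t - n * τ) ^ 2 / 2) := by
      rw [hf]
      simp [abs_mul, abs_pow, abs_of_nonneg (Real.exp_pos _).le,
        abs_of_nonneg (by positivity : (0:ℝ) ≤ 1 / (n.factorial : ℝ))]
    rw [h1]
    have hfac : (0:ℝ) < n.factorial := by exact_mod_cast n.factorial_pos
    calc (1 / (n.factorial : ℝ)) * |x| ^ n * Real.exp (-a * (t - n * τ) ^ 2 / 2)
        ≤ (1 / (n.factorial : ℝ)) * |x| ^ n * 1 := by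
          apply mul_le_mul_of_nonneg_left (hexp n) (by positivity)
      _ = |x| ^ n / n.factorial := by ring
  have hsum : Summable f :=
    Summable.of_norm_bounded (Real.summable_pow_div_factorial |x|) hbound
  have h0 : f 0 = Real.exp (-a * t ^ 2 / 2) := by simp [hf]
  rw [Summable.tsum_eq_zero_add hsum, h0]
  have habs : |Real.exp (-a * t ^ 2 / 2) + (∑' n : ℕ, f (n + 1)) -
      Real.exp (-a * t ^ 2 / 2)| = ‖∑' n : ℕ, f (n + 1)‖ := by
    rw [add_sub_cancel_left, Real.norm_eq_abs]
  rw [habs]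
  have hsum' : Summable (fun n => f (n + 1)) := by
    exact (summable_nat_add_iff 1).mpr hsum
  have hbound' : ∀ n : ℕ, ‖f (n + 1)‖ ≤ |x| * (|x| ^ n / n.factorial) := by
    intro n
    refine (hbound (n + 1)).trans ?_
    rw [pow_succ, Nat.factorial_succ]
    have hfac : (0:ℝ) < n.factorial := by exact_mod_cast n.factorial_pos
    have hfac2 : (n.factorial : ℝ) ≤ ((n + 1) * n.factorial : ℕ) := by
      exact_mod_cast Nat.le_mul_of_pos_left _ (Nat.succ_pos n)
    rw [mul_comm (|x| ^ n) |x|, mul_div_assoc]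
    apply mul_le_mul_of_nonneg_left _ (abs_nonneg x)
    apply div_le_div_of_nonneg_left (by positivity) hfac
    exact_mod_cast hfac2
  calc ‖∑' n : ℕ, f (n + 1)‖ ≤ ∑' n : ℕ, ‖f (n + 1)‖ :=
        norm_tsum_le_tsum_norm hsum'.norm
    _ ≤ ∑' n : ℕ, |x| * (|x| ^ n / n.factorial) := by
        apply Summable.tsum_le_tsum hbound' hsum'.norm
        exact (Real.summable_pow_div_factorial |x|).mul_left |x|
    _ = |x| * ∑' n : ℕ, |x| ^ n / n.factorial := tsum_mul_left
    _ = |x| * Real.exp |x| := by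
        rw [Real.exp_eq_exp_ℝ, NormedSpace.exp_eq_tsum_div]

set_option maxHeartbeats 1000000 in
private lemma aux_main (a b C t : ℝ) (ha : 0 < a) {l : Filter ℝ}
    (hx : Tendsto (fun τ : ℝ => b / (a * τ)) l (nhds 0)) :
    Tendsto (fun τ : ℝ =>
      C * ∑' n : ℕ, (1 / (n.factorial : ℝ)) * (b / (a * τ)) ^ n *
        Real.exp (-a * (t - n * τ) ^ 2 / 2)) l
      (nhds (C * Real.exp (-a * t ^ 2 / 2))) := by
  refine Tendsto.const_mul C ?_
  have hB : Tendsto (fun τ : ℝ => |b / (a * τ)| * Real.exp |b / (a * τ)|) l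
      (nhds 0) := by
    have h1 : Tendsto (fun τ : ℝ => |b / (a * τ)|) l (nhds 0) := by
      simpa using hx.abs
    have h2 : Tendsto (fun τ : ℝ => Real.exp |b / (a * τ)|) l (nhds 1) := by
      simpa [Function.comp_def] using (Real.continuous_exp.tendsto 0).comp h1
    simpa using h1.mul h2
  have hsq : Tendsto (fun τ : ℝ =>
      (∑' n : ℕ, (1 / (n.factorial : ℝ)) * (b / (a * τ)) ^ n *
        Real.exp (-a * (t - n * τ) ^ 2 / 2)) - Real.exp (-a * t ^ 2 / 2)) l
      (nhds 0) :=
    squeeze_zero_norm (fun τ => aux_key a b t τ ha) hB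
  have h := hsq.add (tendsto_const_nhds (x := Real.exp (-a * t ^ 2 / 2)))
  rw [zero_add] at h
  exact h.congr fun τ => by ring

theorem stmt_15 (a b C : ℝ) (ha : 0 < a) (hb : b ≠ 0) :
    ∀ t : ℝ,
      Tendsto (fun τ : ℝ =>
        C * ∑' n : ℕ, (1 / (n.factorial : ℝ)) * (b / (a * τ)) ^ n *
          Real.exp (-a * (t - n * τ) ^ 2 / 2)) atTop
        (nhds (C * Real.exp (-a * t ^ 2 / 2))) ∧
      Tendsto (fun τ : ℝ =>
        C * ∑' n : ℕ, (1 / (n.factorial : ℝ)) * (b / (a * τ)) ^ n *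
          Real.exp (-a * (t - n * τ) ^ 2 / 2)) atBot
        (nhds (C * Real.exp (-a * t ^ 2 / 2))) := by
  intro t
  have heq : (fun τ : ℝ => b / (a * τ)) = fun τ : ℝ => (b / a) * τ⁻¹ := by
    funext τ; rw [div_mul_eq_div_div, div_eq_mul_inv]
  have hx1 : Tendsto (fun τ : ℝ => b / (a * τ)) atTop (nhds 0) := by
    rw [heq]
    simpa using tendsto_inv_atTop_zero.const_mul (b / a)
  have hinv : Tendsto (fun τ : ℝ => τ⁻¹) atBot (nhds (0:ℝ)) := by
    have h := ((tendsto_inv_atTop_zero (𝕜 := ℝ)).comp tendsto_neg_atBot_atTop).neg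
    rw [neg_zero] at h
    exact h.congr fun τ => by simp [inv_neg]
  have hx2 : Tendsto (fun τ : ℝ => b / (a * τ)) atBot (nhds 0) := by
    rw [heq]
    simpa using hinv.const_mul (b / a)
  exact ⟨aux_main a b C t ha hx1, aux_main a b C t ha hx2⟩
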